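/- The subspace D₂ = span{Z₃, Z₄} is a slant distribution with slant angle α: with respect to the standard Euclidean inner product on ℝ⁹ (which is proportional to the Sasakian metric g_p on the relevant vectors at points p whose y-coordinates all vanish), for every nonzero W ∈ D₂ the orthogonal projection P(φW) of φ(W) onto D₂ satisfies ‖P(φW)‖ = cos α · ‖φ(W)‖; equivalently ‖P(φW)‖² = cos² α · ‖W‖². -/

import Mathlib

open Real

set_option maxHeartbeats 1000000

/-- The tensor `φ` of the standard Sasakian structure on `ℝ⁹` (coordinates ordered
`(x₁,x₂,x₃,x₄,y₁,y₂,y₃,y₄,z)`): it sends `(X₁,…,X₄,Y₁,…,Y₄,Z)` to `(Y₁,…,Y₄,-X₁,…,-X₄,0)`. -/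
noncomputable def phi9 (v : EuclideanSpace ℝ (Fin 9)) : EuclideanSpace ℝ (Fin 9) :=
  WithLp.toLp 2 (![v 4, v 5, v 6, v 7, -v 0, -v 1, -v 2, -v 3, 0] : Fin 9 → ℝ)

/-- `Z₃ = -cos α·∂/∂x₃ - sin α·∂/∂x₄`. -/
noncomputable def Z₃ (α : ℝ) : EuclideanSpace ℝ (Fin 9) :=
  WithLp.toLp 2 (![0, 0, -Real.cos α, -Real.sin α, 0, 0, 0, 0, 0] : Fin 9 → ℝ)

/-- `Z₄ = ∂/∂y₃`. -/
noncomputable def Z₄ : EuclideanSpace ℝ (Fin 9) := WithLp.toLp 2 (![0, 0, 0, 0, 0, 0, 1, 0, 0] : Fin 9 → ℝ)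

/-- The distribution `D₂ = span{Z₃, Z₄}`. -/
noncomputable def D₂ (α : ℝ) : Submodule ℝ (EuclideanSpace ℝ (Fin 9)) :=
  Submodule.span ℝ {Z₃ α, Z₄}

section aux
variable {β : Type*} (c0 c1 c2 c3 c4 c5 c6 c7 c8 : β)
lemma vec9_0 : (![c0,c1,c2,c3,c4,c5,c6,c7,c8]) (0 : Fin 9) = c0 := rfl
lemma vec9_1 : (![c0,c1,c2,c3,c4,c5,c6,c7,c8]) (1 : Fin 9) = c1 := rfl
lemma vec9_2 : (![c0,c1,c2,c3,c4,c5,c6,c7,c8]) (2 : Fin 9) = c2 := rfl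
lemma vec9_3 : (![c0,c1,c2,c3,c4,c5,c6,c7,c8]) (3 : Fin 9) = c3 := rfl
lemma vec9_4 : (![c0,c1,c2,c3,c4,c5,c6,c7,c8]) (4 : Fin 9) = c4 := rfl
lemma vec9_5 : (![c0,c1,c2,c3,c4,c5,c6,c7,c8]) (5 : Fin 9) = c5 := rfl
lemma vec9_6 : (![c0,c1,c2,c3,c4,c5,c6,c7,c8]) (6 : Fin 9) = c6 := rfl
lemma vec9_7 : (![c0,c1,c2,c3,c4,c5,c6,c7,c8]) (7 : Fin 9) = c7 := rfl
lemma vec9_8 : (![c0,c1,c2,c3,c4,c5,c6,c7,c8]) (8 : Fin 9) = c8 := rfl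
end aux


/-- `D₂ = span{Z₃, Z₄}` is a slant distribution with slant angle `α`:
with respect to the standard Euclidean inner product on `ℝ⁹`, for every nonzero `W ∈ D₂`
the orthogonal projection `P(φW)` of `φ(W)` onto `D₂` satisfies
`‖P(φW)‖ = cos α · ‖φ(W)‖`; equivalently `‖P(φW)‖² = cos² α · ‖W‖²`. -/
theorem D2_slant (α : ℝ) (hα : α ∈ Set.Ioo 0 (π / 2)) :
    ∀ W ∈ D₂ α, W ≠ 0 →
      ‖(Submodule.orthogonalProjectionOnto (D₂ α) (phi9 W) : EuclideanSpace ℝ (Fin 9))‖ =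
        Real.cos α * ‖phi9 W‖ ∧
      ‖(Submodule.orthogonalProjectionOnto (D₂ α) (phi9 W) : EuclideanSpace ℝ (Fin 9))‖ ^ 2 =
        Real.cos α ^ 2 * ‖W‖ ^ 2 := by
  have hcos : 0 < Real.cos α := Real.cos_pos_of_mem_Ioo ⟨by linarith [hα.1, Real.pi_pos], hα.2⟩
  have hpyth := Real.sin_sq_add_cos_sq α
  intro W hW _hW0
  obtain ⟨a, b, hab⟩ := Submodule.mem_span_pair.mp hW
  subst hab
  set u : EuclideanSpace ℝ (Fin 9) := phi9 (a • Z₃ α + b • Z₄) with hu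
  have hWe : (a • Z₃ α + b • Z₄ : EuclideanSpace ℝ (Fin 9)) =
      WithLp.toLp 2 (![0, 0, -(a * Real.cos α), -(a * Real.sin α), 0, 0, b, 0, 0] : Fin 9 → ℝ) := by
    ext i
    fin_cases i <;>
      simp [Z₃, Z₄, PiLp.add_apply, PiLp.smul_apply, vec9_0, vec9_1, vec9_2, vec9_3,
        vec9_4, vec9_5, vec9_6, vec9_7, vec9_8, mul_comm]
  have hue : u = WithLp.toLp 2 (![0, 0, b, 0, 0, 0, a * Real.cos α, a * Real.sin α, 0] : Fin 9 → ℝ) := by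
    rw [hu, hWe]
    ext i
    fin_cases i <;>
      simp [phi9, vec9_0, vec9_1, vec9_2, vec9_3, vec9_4, vec9_5, vec9_6, vec9_7, vec9_8]
  -- the candidate projection
  set P : EuclideanSpace ℝ (Fin 9) := (-(b * Real.cos α)) • Z₃ α + (a * Real.cos α) • Z₄
    with hP
  have hPmem : P ∈ D₂ α := Submodule.mem_span_pair.mpr ⟨_, _, rfl⟩
  have hPe : P = WithLp.toLp 2 (![0, 0, b * Real.cos α * Real.cos α, b * Real.cos α * Real.sin α, 0, 0,
      a * Real.cos α, 0, 0] : Fin 9 → ℝ) := by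
    rw [hP]
    ext i
    fin_cases i <;>
      simp [Z₃, Z₄, PiLp.add_apply, PiLp.smul_apply, vec9_0, vec9_1, vec9_2, vec9_3,
        vec9_4, vec9_5, vec9_6, vec9_7, vec9_8]
  have h3 : (inner ℝ (u - P) (Z₃ α) : ℝ) = 0 := by
    rw [hue, hPe]
    simp only [PiLp.inner_apply, RCLike.inner_apply, conj_trivial, PiLp.sub_apply, Z₃,
      Fin.sum_univ_succ, Finset.sum_empty, Fin.sum_univ_zero, Matrix.cons_val_zero,
      Matrix.cons_val_succ]
    linear_combination (b * Real.cos α) * hpyth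
  have h4 : (inner ℝ (u - P) Z₄ : ℝ) = 0 := by
    rw [hue, hPe]
    simp only [PiLp.inner_apply, RCLike.inner_apply, conj_trivial, PiLp.sub_apply, Z₄,
      Fin.sum_univ_succ, Finset.sum_empty, Fin.sum_univ_zero, Matrix.cons_val_zero,
      Matrix.cons_val_succ]
    ring
  have hproj : (Submodule.orthogonalProjectionOnto (D₂ α) u : EuclideanSpace ℝ (Fin 9)) = P := by
    apply Submodule.eq_starProjection_of_mem_of_inner_eq_zero hPmem
    intro w hw
    obtain ⟨c, d, rfl⟩ := Submodule.mem_span_pair.mp hw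
    rw [inner_add_right, real_inner_smul_right, real_inner_smul_right, h3, h4]
    ring
  -- norms
  have hnorm : ∀ (v : EuclideanSpace ℝ (Fin 9)), ‖v‖ = Real.sqrt (∑ i, (v i) ^ 2) := by
    intro v
    rw [EuclideanSpace.norm_eq]
    congr 1
    exact Finset.sum_congr rfl fun i _ => by rw [Real.norm_eq_abs, sq_abs]
  have hnP : ‖P‖ = Real.cos α * Real.sqrt (a ^ 2 + b ^ 2) := by
    rw [hnorm, hPe]
    rw [show (∑ i, (WithLp.toLp 2 (![0, 0, b * Real.cos α * Real.cos α, b * Real.cos α * Real.sin α, 0, 0,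
        a * Real.cos α, 0, 0] : Fin 9 → ℝ) : EuclideanSpace ℝ (Fin 9)) i ^ 2)
        = Real.cos α ^ 2 * (a ^ 2 + b ^ 2) by
      simp only [Fin.sum_univ_succ, Fin.sum_univ_zero, Matrix.cons_val_zero,
        Matrix.cons_val_succ]
      nlinarith [hpyth]]
    rw [Real.sqrt_mul (by positivity), Real.sqrt_sq hcos.le]
  have hnu : ‖u‖ = Real.sqrt (a ^ 2 + b ^ 2) := by
    rw [hnorm, hue]
    congr 1
    simp only [Fin.sum_univ_succ, Fin.sum_univ_zero, Matrix.cons_val_zero,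
      Matrix.cons_val_succ]
    nlinarith [hpyth]
  have hnW : ‖(a • Z₃ α + b • Z₄ : EuclideanSpace ℝ (Fin 9))‖ = Real.sqrt (a ^ 2 + b ^ 2) := by
    rw [hnorm, hWe]
    congr 1
    simp only [Fin.sum_univ_succ, Fin.sum_univ_zero, Matrix.cons_val_zero,
      Matrix.cons_val_succ]
    nlinarith [hpyth]
  rw [hproj, hnP, hnu, hnW]
  refine ⟨rfl, ?_⟩
  rw [mul_pow, Real.sq_sqrt (by positivity)]
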